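/- Let X ⊆ A^ℤ and Y ⊆ B^ℤ be two-sided subshifts and let φ' : X' → Y' be a topological conjugacy. Suppose a ∈ A is such that the constant point s = a^ℤ lies in X, and suppose σ(y) = y for every y ∈ sR. Then there exists n ∈ ℕ such that for every x ∈ X' and every i ∈ ℤ, if x_j = a for all j with i - n ≤ j ≤ i + 1 + n, then φ'(x)_i = φ'(x)_{i+1}. -/

import Mathlib

open Set

/-- The two-sided shift map on `A^ℤ`: `(tshift x) i = x (i+1)`. -/
def tshift {A : Type*} (x : ℤ → A) : ℤ → A := fun i => x (i + 1)

/-- A two-sided point is periodic if `σ^n x = x` for some `n ≥ 1`. -/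
def TPeriodic {A : Type*} (x : ℤ → A) : Prop := ∃ n : ℕ, 1 ≤ n ∧ tshift^[n] x = x

/-- `Aper X` is the set `X'` of aperiodic points of `X`. -/
def Aper {A : Type*} (X : Set (ℤ → A)) : Set (ℤ → A) := {x ∈ X | ¬ TPeriodic x}

/-- The word `w` occurs in `x` at position `i`. -/
def OccursAt {A : Type*} (w : List A) (x : ℤ → A) (i : ℤ) : Prop :=
  ∀ j : Fin w.length, x (i + (j : ℕ)) = w.get j

/-- The word `w` occurs somewhere in `x`. -/
def OccursIn {A : Type*} (w : List A) (x : ℤ → A) : Prop := ∃ i : ℤ, OccursAt w x i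

/-- The word `w` occurs in some point of `X`. -/
def WordIn {A : Type*} (w : List A) (X : Set (ℤ → A)) : Prop := ∃ x ∈ X, OccursIn w x

/-- `X` is a (two-sided) subshift: a closed shift-invariant subset of the full shift. -/
def IsSubshift {A : Type*} [TopologicalSpace A] (X : Set (ℤ → A)) : Prop :=
  IsClosed X ∧ tshift '' X = X

/-- `X` is an SFT: it is defined by forbidding a finite set of finite words. -/
def IsSFT {A : Type*} (X : Set (ℤ → A)) : Prop :=
  ∃ F : Set (List A), F.Finite ∧ X = {x | ∀ w ∈ F, ¬ OccursIn w x}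

/-- `X` is transitive: any two words of its language can be joined by a connecting word. -/
def IsTransitiveShift {A : Type*} (X : Set (ℤ → A)) : Prop :=
  ∀ u v : List A, WordIn u X → WordIn v X → ∃ w : List A, WordIn (u ++ w ++ v) X

/-- A map between subsets of full shifts is shift-commuting (wherever the shift stays
in the domain set, which is always the case for shift-invariant sets). -/
def ShiftCommuting2 {A B : Type*} {X : Set (ℤ → A)} {Y : Set (ℤ → B)} (f : X → Y) : Prop :=
  ∀ (x : X) (hx : tshift (x : ℤ → A) ∈ X),
    (f ⟨tshift (x : ℤ → A), hx⟩ : ℤ → B) = tshift (f x : ℤ → B)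

/-- `φ : X → Y` restricts (in domain and codomain) to `φ' : X' → Y'`. -/
def RestrictsTo2 {A B : Type*} {X : Set (ℤ → A)} {Y : Set (ℤ → B)}
    (φ : X → Y) (φ' : Aper X → Aper Y) : Prop :=
  ∀ (x : ℤ → A) (hx : x ∈ Aper X), (φ ⟨x, hx.1⟩ : ℤ → B) = (φ' ⟨x, hx⟩ : ℤ → B)


/-- The relation `R ⊆ X × Y`: the closure of the graph `{(x, φ'(x)) : x ∈ X'}`
(taken in the ambient product space; for closed `X`, `Y` this coincides with the
closure in `X × Y`). -/
def graphRel {A B : Type*} [TopologicalSpace A] [TopologicalSpace B]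
    {X : Set (ℤ → A)} {Y : Set (ℤ → B)} (φ' : Aper X → Aper Y) :
    Set ((ℤ → A) × (ℤ → B)) :=
  closure {p | ∃ x : Aper X, p = ((x : ℤ → A), (φ' x : ℤ → B))}

def shiftZ {A : Type*} (k : ℤ) (x : ℤ → A) : ℤ → A := fun i => x (i + k)

lemma shiftZ_zero {A : Type*} (x : ℤ → A) : shiftZ 0 x = x := by
  funext i; simp [shiftZ]

lemma shiftZ_shiftZ {A : Type*} (k l : ℤ) (x : ℤ → A) :
    shiftZ k (shiftZ l x) = shiftZ (k + l) x := by
  funext i; show x (i + k + l) = x (i + (k + l)); congr 1; ring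

lemma tshift_eq_shiftZ {A : Type*} (x : ℤ → A) : tshift x = shiftZ 1 x := rfl

lemma tshift_iterate {A : Type*} (n : ℕ) (x : ℤ → A) : tshift^[n] x = shiftZ (n : ℤ) x := by
  induction n with
  | zero => simp [shiftZ_zero]
  | succ n ih =>
      rw [Function.iterate_succ_apply', ih, tshift_eq_shiftZ, shiftZ_shiftZ]
      congr 1; push_cast; ring

lemma shiftZ_injective {A : Type*} (k : ℤ) : Function.Injective (shiftZ k (A := A)) := by
  intro x y h
  have := congrArg (shiftZ (-k)) h
  rwa [shiftZ_shiftZ, shiftZ_shiftZ, neg_add_cancel, shiftZ_zero, shiftZ_zero] at this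

lemma tshift_injective {A : Type*} : Function.Injective (tshift (A := A)) := by
  intro x y h
  rw [tshift_eq_shiftZ, tshift_eq_shiftZ] at h
  exact shiftZ_injective 1 h

lemma mem_iff_tshift_mem {A : Type*} {X : Set (ℤ → A)} (hX : tshift '' X = X) (x : ℤ → A) :
    x ∈ X ↔ tshift x ∈ X := by
  constructor
  · intro hx; rw [← hX]; exact ⟨x, hx, rfl⟩
  · intro hx; rw [← hX] at hx
    obtain ⟨x', hx', h⟩ := hx
    rwa [← tshift_injective h]

lemma shiftZ_mem {A : Type*} {X : Set (ℤ → A)} (hX : tshift '' X = X) (k : ℤ)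
    {x : ℤ → A} (hx : x ∈ X) : shiftZ k x ∈ X := by
  induction k using Int.induction_on with
  | zero => rwa [shiftZ_zero]
  | succ k ih =>
      have : shiftZ (k + 1) x = tshift (shiftZ k x) := by
        rw [tshift_eq_shiftZ, shiftZ_shiftZ]; congr 1; ring
      rw [this]; exact (mem_iff_tshift_mem hX _).1 ih
  | pred k ih =>
      have : tshift (shiftZ (-k - 1) x) = shiftZ (-k) x := by
        rw [tshift_eq_shiftZ, shiftZ_shiftZ]; congr 1; ring
      exact (mem_iff_tshift_mem hX _).2 (this ▸ ih)

lemma tperiodic_of_shiftZ {A : Type*} (k : ℤ) {x : ℤ → A} (h : TPeriodic (shiftZ k x)) :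
    TPeriodic x := by
  obtain ⟨n, hn, heq⟩ := h
  refine ⟨n, hn, ?_⟩
  rw [tshift_iterate] at heq ⊢
  apply shiftZ_injective k
  rw [shiftZ_shiftZ] at heq ⊢
  rw [add_comm] at heq
  exact heq

lemma shiftZ_mem_aper {A : Type*} {X : Set (ℤ → A)} (hX : tshift '' X = X) (k : ℤ)
    {x : ℤ → A} (hx : x ∈ Aper X) : shiftZ k x ∈ Aper X :=
  ⟨shiftZ_mem hX k hx.1, fun h => hx.2 (tperiodic_of_shiftZ k h)⟩

lemma phi_shiftZ {A B : Type*} {X : Set (ℤ → A)} {Y : Set (ℤ → B)}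
    (hX : tshift '' X = X)
    (φ' : Aper X → Aper Y) (hφ' : ShiftCommuting2 φ')
    (k : ℤ) : ∀ (x : ℤ → A) (hx : x ∈ Aper X) (hx' : shiftZ k x ∈ Aper X),
    (φ' ⟨shiftZ k x, hx'⟩ : ℤ → B) = shiftZ k ((φ' ⟨x, hx⟩ : ℤ → B)) := by
  induction k using Int.induction_on with
  | zero =>
      intro x hx hx'
      have e : (⟨shiftZ 0 x, hx'⟩ : Aper X) = ⟨x, hx⟩ := Subtype.ext (shiftZ_zero x)
      rw [e, shiftZ_zero]
  | succ k ih =>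
      intro x hx hx'
      have e : shiftZ (k + 1) x = tshift (shiftZ k x) := by
        rw [tshift_eq_shiftZ, shiftZ_shiftZ]; congr 1; ring
      have hk : shiftZ k x ∈ Aper X := shiftZ_mem_aper hX k hx
      have e2 : (⟨shiftZ (k + 1) x, hx'⟩ : Aper X) = ⟨tshift (shiftZ k x), e ▸ hx'⟩ :=
        Subtype.ext e
      rw [e2, hφ' ⟨shiftZ k x, hk⟩ (e ▸ hx'), ih x hx hk, tshift_eq_shiftZ, shiftZ_shiftZ]
      congr 1; ring
  | pred k ih =>
      intro x hx hx'
      have hk : shiftZ (-k) x ∈ Aper X := shiftZ_mem_aper hX (-k) hx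
      have e : tshift (shiftZ (-k - 1) x) = shiftZ (-k) x := by
        rw [tshift_eq_shiftZ, shiftZ_shiftZ]; congr 1; ring
      have h1 := hφ' ⟨shiftZ (-k - 1) x, hx'⟩ (e ▸ hk)
      have e2 : (⟨tshift (shiftZ (-k - 1) x), e ▸ hk⟩ : Aper X) = ⟨shiftZ (-k) x, hk⟩ :=
        Subtype.ext e
      rw [e2, ih x hx hk] at h1
      have h2 := congrArg (shiftZ (-1)) h1.symm
      rw [tshift_eq_shiftZ, shiftZ_shiftZ, shiftZ_shiftZ] at h2
      rw [show (-1 : ℤ) + 1 = 0 by ring, shiftZ_zero] at h2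
      rw [h2]; congr 1; ring

/-- Suppose `s = a^ℤ ∈ X` and every `y ∈ sR` is fixed by the shift. Then
there is `n` such that for every aperiodic `x ∈ X'`: whenever `x` equals `a` on the whole
interval `[i - n, i + 1 + n]`, the images satisfy `φ'(x)_i = φ'(x)_{i+1}`. -/
theorem statement6 {A B : Type*} [Fintype A] [TopologicalSpace A] [DiscreteTopology A]
    [Fintype B] [TopologicalSpace B] [DiscreteTopology B]
    (X : Set (ℤ → A)) (Y : Set (ℤ → B))
    (hX : IsSubshift X) (hY : IsSubshift Y)
    (φ' : Aper X ≃ₜ Aper Y) (hφ' : ShiftCommuting2 ⇑φ')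
    (a : A) (hs : (fun _ : ℤ => a) ∈ X)
    (hfix : ∀ y ∈ Y, ((fun _ : ℤ => a), y) ∈ graphRel ⇑φ' → tshift y = y) :
    ∃ n : ℕ, ∀ (x : ℤ → A) (hx : x ∈ Aper X) (i : ℤ),
      (∀ j : ℤ, i - (n : ℤ) ≤ j ∧ j ≤ i + 1 + (n : ℤ) → x j = a) →
      (φ' ⟨x, hx⟩ : ℤ → B) i = (φ' ⟨x, hx⟩ : ℤ → B) (i + 1) := by
  by_contra hcon
  push_neg at hcon
  choose x hx i hall hne using hcon
  -- shift the counterexamples to position 0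
  set u : ℕ → (ℤ → A) := fun n => shiftZ (i n) (x n) with hudef
  have hu : ∀ n, u n ∈ Aper X := fun n => shiftZ_mem_aper hX.2 (i n) (hx n)
  set v : ℕ → (ℤ → B) := fun n => (φ' ⟨u n, hu n⟩ : ℤ → B) with hvdef
  have hv : ∀ n, v n = shiftZ (i n) ((φ' ⟨x n, hx n⟩ : ℤ → B)) := fun n =>
    phi_shiftZ hX.2 ⇑φ' hφ' (i n) (x n) (hx n) (hu n)
  have hua : ∀ n : ℕ, ∀ j : ℤ, -(n : ℤ) ≤ j → j ≤ (n : ℤ) + 1 → u n j = a := by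
    intro n j h1 h2
    exact hall n (j + i n) ⟨by omega, by omega⟩
  have hvne : ∀ n, v n 0 ≠ v n 1 := by
    intro n
    have e0 : v n 0 = (φ' ⟨x n, hx n⟩ : ℤ → B) (i n) := by
      rw [hv n]; show (φ' ⟨x n, hx n⟩ : ℤ → B) (0 + i n) = _; congr 1; ring
    have e1 : v n 1 = (φ' ⟨x n, hx n⟩ : ℤ → B) (i n + 1) := by
      rw [hv n]; show (φ' ⟨x n, hx n⟩ : ℤ → B) (1 + i n) = _; congr 1; ring
    rw [e0, e1]; exact hne n
  have hvY : ∀ n, v n ∈ Y := fun n => (φ' ⟨u n, hu n⟩).2.1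
  -- extract a convergent subsequence
  obtain ⟨p, ψ, hψ, htend⟩ :=
    SeqCompactSpace.tendsto_subseq (fun n => ((u n, v n) : (ℤ → A) × (ℤ → B)))
  have htend1 : Filter.Tendsto (fun n => u (ψ n)) Filter.atTop (nhds p.1) :=
    (continuous_fst.tendsto p).comp htend
  have htend2 : Filter.Tendsto (fun n => v (ψ n)) Filter.atTop (nhds p.2) :=
    (continuous_snd.tendsto p).comp htend
  -- the limit lies in the graph relation
  have hgr : p ∈ graphRel ⇑φ' := by
    refine mem_closure_of_tendsto htend (Filter.Eventually.of_forall fun n => ?_)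
    exact ⟨⟨u (ψ n), hu (ψ n)⟩, rfl⟩
  -- second component lies in Y
  have hpY : p.2 ∈ Y :=
    hY.1.mem_of_tendsto htend2 (Filter.Eventually.of_forall fun n => hvY (ψ n))
  -- pointwise eventual stabilization
  have hevA : ∀ j : ℤ, ∀ᶠ n in Filter.atTop, u (ψ n) j = p.1 j := by
    intro j
    have := ((continuous_apply j).tendsto p.1).comp htend1
    rwa [nhds_discrete, Filter.tendsto_pure] at this
  have hevB : ∀ j : ℤ, ∀ᶠ n in Filter.atTop, v (ψ n) j = p.2 j := by
    intro j
    have := ((continuous_apply j).tendsto p.2).comp htend2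
    rwa [nhds_discrete, Filter.tendsto_pure] at this
  -- first component is the constant point a
  have hp1 : p.1 = fun _ : ℤ => a := by
    funext j
    obtain ⟨n, e1, e2⟩ := ((hevA j).and (Filter.eventually_ge_atTop j.natAbs)).exists
    have hn : j.natAbs ≤ ψ n := le_trans e2 (hψ.le_apply)
    rw [← e1]
    exact hua (ψ n) j (by omega) (by omega)
  -- second component has two distinct consecutive values
  have hp2 : p.2 0 ≠ p.2 1 := by
    obtain ⟨n, e0, e1⟩ := ((hevB 0).and (hevB 1)).exists
    rw [← e0, ← e1]
    exact hvne (ψ n)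
  -- contradiction with hfix
  have hfx := hfix p.2 hpY (by rw [← hp1]; exact hgr)
  have := congrFun hfx 0
  simp only [tshift] at this
  rw [show (0 : ℤ) + 1 = 1 by ring] at this
  exact hp2 this.symm
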